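/- The greatest common divisor of the numbers of arcs connecting the various pairs of marked points is invariant under the action of the cactus group J_n: for every g ∈ J_n and every x ∈ X(l_1,...,l_n,l_∞), the gcd of the arc-multiplicities between pairs of points in g·x equals the corresponding gcd for x. -/

import Mathlib

namespace CactusPaper

/-- The indexing set of the generators `s_{p,q}`, `1 ≤ p < q ≤ n`, of the cactus group. -/
abbrev GenIdx (n : ℕ) : Type := {pq : ℕ × ℕ // 1 ≤ pq.1 ∧ pq.1 < pq.2 ∧ pq.2 ≤ n}

/-- The defining relations of the cactus group `J_n`:
`s_{p,q}² = e`;  `s_{p,q} s_{p',q'} = s_{p',q'} s_{p,q}` whenever the intervals `[p,q]` and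
`[p',q']` are disjoint;  `s_{p,q} s_{p',q'} s_{p,q} = s_{p+q-q', p+q-p'}` whenever
`p ≤ p' < q' ≤ q`. -/
def cactusRels (n : ℕ) : Set (FreeGroup (GenIdx n)) :=
  {w | (∃ s : GenIdx n, w = FreeGroup.of s * FreeGroup.of s) ∨
    (∃ s t : GenIdx n, (s.1.2 < t.1.1 ∨ t.1.2 < s.1.1) ∧
      w = FreeGroup.of s * FreeGroup.of t * (FreeGroup.of s)⁻¹ * (FreeGroup.of t)⁻¹) ∨
    (∃ s t u : GenIdx n, s.1.1 ≤ t.1.1 ∧ t.1.2 ≤ s.1.2 ∧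
      u.1.1 = s.1.1 + s.1.2 - t.1.2 ∧ u.1.2 = s.1.1 + s.1.2 - t.1.1 ∧
      w = FreeGroup.of s * FreeGroup.of t * FreeGroup.of s * (FreeGroup.of u)⁻¹)}

/-- The cactus group `J_n`, presented by the generators `s_{p,q}` and the cactus relations. -/
abbrev CactusGroup (n : ℕ) : Type := PresentedGroup (cactusRels n)

/-- The generator `s_{p,q}` of the cactus group `J_n`. -/
def gen (n : ℕ) (s : GenIdx n) : CactusGroup n := PresentedGroup.of s

/-- The generator `s_{p,q}` of `J_n`, with the constraints on `p, q` given separately. -/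
def genPQ (n p q : ℕ) (h1 : 1 ≤ p) (h2 : p < q) (h3 : q ≤ n) : CactusGroup n :=
  gen n ⟨(p, q), h1, h2, h3⟩

/-- Raw data of an arc diagram on the disc with `n+1` marked boundary points:
position `0` carries `z_∞` and positions `1, …, n` carry the finite points, in clockwise
order starting from `z_∞`;  `lbl k` is the index `i` of the label `z_i` sitting at
position `k`, and `mult i j` is the number of (parallel, non-crossing) arcs joining the
marked points at positions `i` and `j`.  (An isotopy class of a system of non-crossing
arcs is faithfully recorded by these multiplicities.) -/
structure PreDiagram (n : ℕ) where
  lbl : ℕ → ℕ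
  mult : ℕ → ℕ → ℕ

/-- The valence (total number of arc ends) at position `k`. -/
def valence {n : ℕ} (D : PreDiagram n) (k : ℕ) : ℕ :=
  ∑ j ∈ Finset.range (n + 1), D.mult k j

/-- `D` is an arc diagram in `X(l 1, …, l n, linf)`: the labels of positions `1, …, n` are
a bijection of `{1, …, n}` (normalized to `0` elsewhere), the multiplicity matrix is
symmetric, loopless and supported on positions `≤ n`, the arcs are pairwise non-crossing,
the point `z_∞` has valence `linf`, and the point `z_i` has valence `l i`. -/
def IsDiagram {n : ℕ} (l : ℕ → ℕ) (linf : ℕ) (D : PreDiagram n) : Prop :=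
  Set.BijOn D.lbl (Set.Icc 1 n) (Set.Icc 1 n) ∧
  (∀ k, k ∉ Set.Icc 1 n → D.lbl k = 0) ∧
  (∀ i j, D.mult i j = D.mult j i) ∧
  (∀ i, D.mult i i = 0) ∧
  (∀ i j, n < i ∨ n < j → D.mult i j = 0) ∧
  (∀ a b c d, a < b → b < c → c < d → d ≤ n → D.mult a c = 0 ∨ D.mult b d = 0) ∧
  valence D 0 = linf ∧
  (∀ k, 1 ≤ k → k ≤ n → valence D k = l (D.lbl k))

/-- The set `X(l 1, …, l n, linf)` of arc diagrams. -/
abbrev ADiagram (n : ℕ) (l : ℕ → ℕ) (linf : ℕ) : Type :=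
  {D : PreDiagram n // IsDiagram l linf D}

/-- The involution of positions reversing the interval `[p,q]`. -/
def sigmaRev (p q k : ℕ) : ℕ := if p ≤ k ∧ k ≤ q then p + q - k else k

/-- The number of arcs at position `a` crossing the shear line of `s_{p,q}`, i.e. joining
`a` to a position outside `[p,q]`. -/
def crossDeg {n : ℕ} (D : PreDiagram n) (p q a : ℕ) : ℕ :=
  ∑ j ∈ (Finset.range (n + 1)).filter (fun j => j < p ∨ q < j), D.mult a j

/-- Cumulative count, along the shear line of `s_{p,q}`, of the crossing arcs of the *new*
(reversed) diagram emanating from positions `p, …, a` of the active region (the point at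
position `b` of the new diagram is the point at position `p+q-b` of the old one). -/
def inCum {n : ℕ} (D : PreDiagram n) (p q a : ℕ) : ℕ :=
  ∑ b ∈ Finset.Icc p a, crossDeg D p q (p + q - b)

/-- The positions outside `[p,q]` in their order along the shear line, starting from the
end of the shear line lying between positions `p-1` and `p`:
`p-1, p-2, …, 1, 0, n, n-1, …, q+1`. -/
def outRank (n p j : ℕ) : ℕ := if j < p then p - 1 - j else p + (n - j)

/-- Cumulative count, along the shear line, of the crossing arc ends outside the active
region, up to (and including) those attached at position `j`. -/
def outCum {n : ℕ} (D : PreDiagram n) (p q j : ℕ) : ℕ :=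
  ∑ j' ∈ (Finset.range (n + 1)).filter
      (fun j' => (j' < p ∨ q < j') ∧ outRank n p j' ≤ outRank n p j),
    crossDeg D p q j'

/-- The number of arcs of the new diagram joining a position `a ∈ [p,q]` to a position
`j ∉ [p,q]`: the cut arcs are reconnected matching up, in order, the crossing arc ends on
the two sides of the shear line (this being the unique non-crossing reconnection), so this
number is the overlap of the interval of shear-line indices belonging to `a` with the one
belonging to `j`. -/
def crossMult {n : ℕ} (D : PreDiagram n) (p q a j : ℕ) : ℕ :=
  min (inCum D p q a) (outCum D p q j) -
    max (inCum D p q a - crossDeg D p q (p + q - a)) (outCum D p q j - crossDeg D p q j)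

/-- The action of the generator `s_{p,q}` on arc-diagram data: the marked points at the
positions in `[p,q]` are reversed (together with their labels), the arcs inside the active
region are reflected along with them, the arcs outside are kept, and the arcs crossing the
shear line are reconnected in the unique non-crossing fashion. -/
def genAct {n : ℕ} (p q : ℕ) (D : PreDiagram n) : PreDiagram n where
  lbl := fun k => D.lbl (sigmaRev p q k)
  mult := fun i j =>
    if n < i ∨ n < j then 0
    else if (p ≤ i ∧ i ≤ q) ∧ (p ≤ j ∧ j ≤ q) then D.mult (sigmaRev p q i) (sigmaRev p q j)
    else if p ≤ i ∧ i ≤ q then crossMult D p q i j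
    else if p ≤ j ∧ j ≤ q then crossMult D p q j i
    else D.mult i j

/-- `A` is *the* action of the cactus group `J_n` on `X(l 1, …, l n, linf)`: a group
homomorphism `J_n →* Perm(X)` sending each generator `s_{p,q}` to the
reversal-and-reconnection operation `genAct p q`. -/
def IsCactusAction {n : ℕ} (l : ℕ → ℕ) (linf : ℕ)
    (A : CactusGroup n →* Equiv.Perm (ADiagram n l linf)) : Prop :=
  ∀ (s : GenIdx n) (x : ADiagram n l linf),
    ((A (gen n s)) x).1 = genAct s.1.1 s.1.2 x.1

/-- The border thickness of an arc diagram: the minimal number of arcs joining a pair of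
adjacent marked points (positions `k` and `k+1 mod (n+1)`). -/
noncomputable def borderThickness {n : ℕ} (D : PreDiagram n) : ℕ :=
  sInf {m : ℕ | ∃ k ≤ n, m = D.mult k ((k + 1) % (n + 1))}

/-- The greatest common divisor of all the arc multiplicities of the diagram. -/
def multGcd {n : ℕ} (D : PreDiagram n) : ℕ :=
  Finset.gcd (Finset.range (n + 1) ×ˢ Finset.range (n + 1)) (fun ij => D.mult ij.1 ij.2)

/-- Clockwise cyclic distance from position `k` to position `j` among the `n+1`
boundary positions. -/
def cdist (n k j : ℕ) : ℕ := (j + (n + 1) - k) % (n + 1)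

/-- The number of arc ends at `k` lying strictly clockwise of the bundle of parallel arcs
joining `k` to `j` (the arcs from `k` to clockwise-nearer targets attach to `k` on the
clockwise side). -/
def cumBefore {n : ℕ} (D : PreDiagram n) (k j : ℕ) : ℕ :=
  ∑ j' ∈ (Finset.range (n + 1)).filter (fun j' => cdist n k j' < cdist n k j), D.mult k j'

/-- Arc ends: at position `k` the `valence D k` arc ends are numbered `0, 1, …` in
clockwise order.  `ArcRel D (k, t) (j, s)` holds exactly when some arc of the diagram has
its two ends at `(k, t)` and `(j, s)`: the `r`-th parallel arc (counted from the outermost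
one) of the bundle joining `k` and `j` attaches at its two endpoints in opposite relative
orders. -/
def ArcRel {n : ℕ} (D : PreDiagram n) (e f : ℕ × ℕ) : Prop :=
  ∃ r < D.mult e.1 f.1,
    e.2 = valence D e.1 - cumBefore D e.1 f.1 - 1 - r ∧
    f.2 = valence D f.1 - cumBefore D f.1 e.1 - D.mult e.1 f.1 + r

/-- The right-hand-rule pairing: at each marked point the consecutive arc ends `2r` and
`2r + 1` (in clockwise order) are joined within one loop of the decomposition. -/
def RhrRel {n : ℕ} (D : PreDiagram n) (e f : ℕ × ℕ) : Prop :=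
  e.1 = f.1 ∧ ∃ r, e.2 = 2 * r ∧ f.2 = 2 * r + 1

/-- The arc ends of an arc diagram. -/
abbrev Endpoint {n : ℕ} (D : PreDiagram n) : Type :=
  {e : ℕ × ℕ // e.1 ≤ n ∧ e.2 < valence D e.1}

/-- The number of components of an arc diagram all of whose valences are even: the number
of closed non-overlapping loops into which the arcs decompose under the right-hand rule.
Formally, it is the number of equivalence classes of arc ends under the equivalence
relation generated by "being the two ends of one arc" (`ArcRel`) together with the
right-hand-rule pairing at each marked point (`RhrRel`). -/
noncomputable def numComponents {n : ℕ} (D : PreDiagram n) : ℕ :=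
  Nat.card (Quot (fun e f : Endpoint D => ArcRel D e.1 f.1 ∨ RhrRel D e.1 f.1))

lemma dvd_mult_all {n : ℕ} {l : ℕ → ℕ} {linf : ℕ} {D : PreDiagram n}
    (hD : IsDiagram l linf D) (a j : ℕ) : multGcd D ∣ D.mult a j := by
  by_cases h : a ≤ n ∧ j ≤ n
  · have hm : ((a, j) : ℕ × ℕ) ∈ Finset.range (n + 1) ×ˢ Finset.range (n + 1) :=
      Finset.mem_product.mpr
        ⟨Finset.mem_range.mpr (by omega), Finset.mem_range.mpr (by omega)⟩
    exact Finset.gcd_dvd hm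
  · rw [hD.2.2.2.2.1 a j (by omega)]; exact dvd_zero _

lemma dvd_crossDeg {n : ℕ} {l : ℕ → ℕ} {linf : ℕ} {D : PreDiagram n}
    (hD : IsDiagram l linf D) (p q a : ℕ) : multGcd D ∣ crossDeg D p q a :=
  Finset.dvd_sum fun j _ => dvd_mult_all hD a j

lemma dvd_inCum {n : ℕ} {l : ℕ → ℕ} {linf : ℕ} {D : PreDiagram n}
    (hD : IsDiagram l linf D) (p q a : ℕ) : multGcd D ∣ inCum D p q a :=
  Finset.dvd_sum fun b _ => dvd_crossDeg hD p q _

lemma dvd_outCum {n : ℕ} {l : ℕ → ℕ} {linf : ℕ} {D : PreDiagram n}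
    (hD : IsDiagram l linf D) (p q j : ℕ) : multGcd D ∣ outCum D p q j :=
  Finset.dvd_sum fun j' _ => dvd_crossDeg hD p q _

lemma dvd_crossMult {n : ℕ} {l : ℕ → ℕ} {linf : ℕ} {D : PreDiagram n}
    (hD : IsDiagram l linf D) (p q a j : ℕ) : multGcd D ∣ crossMult D p q a j := by
  unfold crossMult
  have h1 := dvd_inCum hD p q a
  have h2 := dvd_outCum hD p q j
  have h3 := dvd_crossDeg hD p q (p + q - a)
  have h4 := dvd_crossDeg hD p q j
  have hmin : multGcd D ∣ min (inCum D p q a) (outCum D p q j) := by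
    rcases min_choice (inCum D p q a) (outCum D p q j) with h | h <;> rw [h] <;> assumption
  have hmax : multGcd D ∣
      max (inCum D p q a - crossDeg D p q (p + q - a)) (outCum D p q j - crossDeg D p q j) := by
    rcases max_choice (inCum D p q a - crossDeg D p q (p + q - a))
        (outCum D p q j - crossDeg D p q j) with h | h <;> rw [h] <;>
      exact Nat.dvd_sub (by assumption) (by assumption)
  exact Nat.dvd_sub hmin hmax

lemma dvd_genAct {n : ℕ} {l : ℕ → ℕ} {linf : ℕ} {D : PreDiagram n}
    (hD : IsDiagram l linf D) (p q : ℕ) : multGcd D ∣ multGcd (genAct p q D) := by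
  refine Finset.dvd_gcd fun ij _ => ?_
  show multGcd D ∣ (genAct p q D).mult ij.1 ij.2
  simp only [genAct]
  split
  · exact dvd_zero _
  split
  · exact dvd_mult_all hD _ _
  split
  · exact dvd_crossMult hD _ _ _ _
  split
  · exact dvd_crossMult hD _ _ _ _
  · exact dvd_mult_all hD _ _

lemma gen_sq {n : ℕ} (s : GenIdx n) : gen n s * gen n s = 1 := by
  have h : (FreeGroup.of s * FreeGroup.of s : FreeGroup (GenIdx n)) ∈
      Subgroup.normalClosure (cactusRels n) :=
    Subgroup.subset_normalClosure (Or.inl ⟨s, rfl⟩)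
  exact (QuotientGroup.eq_one_iff _).mpr h

lemma gen_invariant {n : ℕ} {l : ℕ → ℕ} {linf : ℕ}
    (A : CactusGroup n →* Equiv.Perm (ADiagram n l linf)) (hA : IsCactusAction l linf A)
    (s : GenIdx n) (x : ADiagram n l linf) :
    multGcd ((A (gen n s)) x).1 = multGcd x.1 := by
  set y := (A (gen n s)) x with hy
  have hyx : (A (gen n s)) y = x := by
    rw [hy, ← Equiv.Perm.mul_apply, ← map_mul, gen_sq, map_one, Equiv.Perm.one_apply]
  have h1 : multGcd y.1 ∣ multGcd x.1 := by
    have := dvd_genAct (D := y.1) y.2 s.1.1 s.1.2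
    rwa [← hA s y, hyx] at this
  have h2 : multGcd x.1 ∣ multGcd y.1 := by
    have := dvd_genAct (D := x.1) x.2 s.1.1 s.1.2
    rwa [← hA s x, ← hy] at this
  exact Nat.dvd_antisymm h1 h2

/-- The greatest common divisor of the numbers of arcs connecting the
various pairs of marked points is invariant under the action of the cactus group `J_n`:
for every `g ∈ J_n` and every `x ∈ X(l 1, …, l n, linf)`, the gcd of the arc
multiplicities of `g • x` equals the corresponding gcd for `x`. -/
theorem statement_5 (n : ℕ) (l : ℕ → ℕ) (linf : ℕ)
    (A : CactusGroup n →* Equiv.Perm (ADiagram n l linf)) (hA : IsCactusAction l linf A)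
    (g : CactusGroup n) (x : ADiagram n l linf) :
    multGcd ((A g) x).1 = multGcd x.1 := by
  revert x
  induction g using QuotientGroup.induction_on with
  | _ w =>
    induction w using FreeGroup.induction_on with
    | C1 => intro x; rw [QuotientGroup.mk_one]; show multGcd ((A 1) x).1 = _; rw [map_one, Equiv.Perm.one_apply]
    | of s => exact gen_invariant A hA s
    | inv_of s ih =>
      intro x
      have h : (QuotientGroup.mk (pure s : FreeGroup (GenIdx n))⁻¹ : CactusGroup n)
          = gen n s := by
        rw [QuotientGroup.mk_inv]
        exact inv_eq_of_mul_eq_one_left (gen_sq s)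
      have h' := gen_invariant A hA s x
      rw [← h] at h'
      exact h'
    | mul w1 w2 ih1 ih2 =>
      intro x
      rw [QuotientGroup.mk_mul]
      exact (congrArg (fun y : Equiv.Perm (ADiagram n l linf) => multGcd (y x).1)
        (map_mul A (QuotientGroup.mk w1 : CactusGroup n) (QuotientGroup.mk w2))).trans
        ((ih1 _).trans (ih2 x))

end CactusPaper
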